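/- Let P, N₂ > 0 and α₁, α₂, α₀ ∈ [0,1] with α₁ ≤ 3/8, α₁ ≥ 3(α₀+α₂), and α₀P = N₂. Then (1/2)·log(c₁₁ + (1−α₀−α₁−α₂)P / ((α₀+α₁+2α₂)P + N₂)) ≥ (1/2)·log((17/40)/α₁), where c₁₁ = (1−α₀−α₁−α₂)/(2−α₀−α₁−α₂). -/
import Mathlib


theorem type4_largeR1_gap (P N₂ α₀ α₁ α₂ : ℝ)
    (hP : 0 < P) (hN₂ : 0 < N₂)
    (hα₀0 : 0 ≤ α₀) (hα₀1 : α₀ ≤ 1) (hα₁0 : 0 ≤ α₁) (hα₁1 : α₁ ≤ 1)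
    (hα₂0 : 0 ≤ α₂) (hα₂1 : α₂ ≤ 1)
    (h1 : α₁ ≤ 3/8) (h2 : α₁ ≥ 3 * (α₀ + α₂)) (h3 : α₀ * P = N₂) :
    (1/2) * Real.logb 2 ((1 - α₀ - α₁ - α₂) / (2 - α₀ - α₁ - α₂)
        + (1 - α₀ - α₁ - α₂) * P / ((α₀ + α₁ + 2*α₂) * P + N₂))
      ≥ (1/2) * Real.logb 2 ((17/40) / α₁) := by
  have hα₀ : 0 < α₀ := by nlinarith
  have hα₁ : 0 < α₁ := by linarith
  have hs : α₀ + α₁ + α₂ ≤ 1/2 := by linarith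
  have hd2 : 0 < 2 - α₀ - α₁ - α₂ := by linarith
  have hD : 0 < (α₀ + α₁ + 2*α₂) * P + N₂ := by positivity
  have hc : (1:ℝ)/3 ≤ (1 - α₀ - α₁ - α₂) / (2 - α₀ - α₁ - α₂) := by
    rw [le_div_iff₀ hd2]; linarith
  have hsc : (3 - 4*α₁) * ((α₀ + α₁ + 2*α₂) + α₀) ≤ (1 - α₀ - α₁ - α₂) * (5*α₁) := by
    nlinarith [mul_nonneg (by linarith : (0:ℝ) ≤ 2 - α₁) (by linarith : (0:ℝ) ≤ α₁ - 3*(α₀+α₂))]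
  have hr : (3 - 4*α₁) / (5*α₁) ≤ (1 - α₀ - α₁ - α₂) * P / ((α₀ + α₁ + 2*α₂) * P + N₂) := by
    rw [div_le_div_iff₀ (by positivity) hD, ← h3]
    nlinarith [mul_le_mul_of_nonneg_right hsc hP.le]
  have hkey : (17/40) / α₁ ≤ (1 - α₀ - α₁ - α₂) / (2 - α₀ - α₁ - α₂)
        + (1 - α₀ - α₁ - α₂) * P / ((α₀ + α₁ + 2*α₂) * P + N₂) := by
    have : (17/40) / α₁ ≤ 1/3 + (3 - 4*α₁) / (5*α₁) := by
      rw [div_add_div _ _ (by norm_num) (by positivity), div_le_div_iff₀ hα₁ (by positivity)]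
      nlinarith
    linarith
  have hx : (0:ℝ) < (17/40) / α₁ := by positivity
  gcongr (1/2) * ?_
  exact Real.logb_le_logb_of_le one_lt_two hx hkey
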